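/- Let a, ρ, t, ω be rational numbers with ω ≠ 0 and a·t⁴ ≠ 1, and set x = (t² + ρ)/ω and y = (a·ρ·t² + 1)/ω. Then a·x³ − y = t²·(y³ − a·x) holds if and only if a²·ρ³·t⁴ + (3a·ρ² − 1)·t² + a·ρ³ = ω². -/
import Mathlib


theorem stmt_4 (a ρ t ω : ℚ) (hω : ω ≠ 0) (ha : a * t ^ 4 ≠ 1)
    (x y : ℚ) (hx : x = (t ^ 2 + ρ) / ω) (hy : y = (a * ρ * t ^ 2 + 1) / ω) :
    a * x ^ 3 - y = t ^ 2 * (y ^ 3 - a * x) ↔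
      a ^ 2 * ρ ^ 3 * t ^ 4 + (3 * a * ρ ^ 2 - 1) * t ^ 2 + a * ρ ^ 3 = ω ^ 2 := by
  have hω3 : ω ^ 3 ≠ 0 := pow_ne_zero _ hω
  have key : a * x ^ 3 - y - t ^ 2 * (y ^ 3 - a * x) =
      (1 - a * t ^ 4) *
        (a ^ 2 * ρ ^ 3 * t ^ 4 + (3 * a * ρ ^ 2 - 1) * t ^ 2 + a * ρ ^ 3 - ω ^ 2) / ω ^ 3 := by
    subst hx hy
    field_simp
    ring
  rw [← sub_eq_zero, key, div_eq_zero_iff, or_iff_left hω3, mul_eq_zero,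
    or_iff_right (sub_ne_zero.mpr (Ne.symm ha)), sub_eq_zero]
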